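/- Under the MAR assumption, for mutually exclusive class indicators D₁, D₂ (D₁D₂ = 0 a.s.), the covariance between the mean-score single-observation terms M₁ = V·D₁ + (1 − V)·ρ₁ and M₂ = V·D₂ + (1 − V)·ρ₂ equals Cov(M₁, M₂) = E[ (1 − π) · ρ₁ρ₂ ] − θ₁θ₂, where θ_k = ℙ(D_k = 1). -/

import Mathlib

open MeasureTheory ProbabilityTheory

section Aux

variable {Ω : Type*} {mΩ : MeasurableSpace Ω}

/-- A function with values in `{0,1}` is integrable over a probability measure. -/
lemma aux_int_of_val (μ : Measure Ω) [IsProbabilityMeasure μ] {f : Ω → ℝ}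
    (hf : Measurable[mΩ] f) (hval : ∀ ω, f ω = 0 ∨ f ω = 1) : Integrable f μ := by
  refine (integrable_const (1 : ℝ)).mono' hf.aestronglyMeasurable (Filter.Eventually.of_forall ?_)
  intro ω
  rcases hval ω with h | h <;> simp [h]

/-- A `{0,1}`-valued function equals the indicator of its level set at 1. -/
lemma aux_eq_indicator {f : Ω → ℝ} (hval : ∀ ω, f ω = 0 ∨ f ω = 1) :
    f = Set.indicator {ω | f ω = 1} (fun _ => (1 : ℝ)) := by
  funext ω
  rcases hval ω with h | h
  · simp [Set.indicator_apply, h]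
  · simp [Set.indicator_apply, h]

/-- The conditional expectation of a `{0,1}`-valued function is a.e. bounded by 1 in norm. -/
lemma aux_condexp_bound (μ : Measure Ω) [IsProbabilityMeasure μ] {f : Ω → ℝ}
    (hf : Measurable[mΩ] f) (hval : ∀ ω, f ω = 0 ∨ f ω = 1)
    (𝒢 : MeasurableSpace Ω) :
    ∀ᵐ ω ∂μ, ‖(μ[f | 𝒢]) ω‖ ≤ 1 := by
  have hfi : Integrable f μ := aux_int_of_val μ hf hval
  have h0 : 0 ≤ᵐ[μ] μ[f | 𝒢] := by
    refine condExp_nonneg (Filter.Eventually.of_forall fun ω => ?_)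
    rcases hval ω with h | h <;> simp [h]
  have h1 : μ[f | 𝒢] ≤ᵐ[μ] μ[(fun _ => (1 : ℝ)) | 𝒢] := by
    refine condExp_mono hfi (integrable_const 1) (Filter.Eventually.of_forall fun ω => ?_)
    rcases hval ω with h | h <;> simp [h]
  by_cases h𝒢le : 𝒢 ≤ mΩ
  · have hc : μ[(fun _ => (1 : ℝ)) | 𝒢] = fun _ => (1 : ℝ) := condExp_const h𝒢le 1
    filter_upwards [h0, h1] with ω hω0 hω1
    rw [hc] at hω1
    simp only [Pi.zero_apply] at hω0
    rw [Real.norm_eq_abs, abs_le]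
    exact ⟨by linarith, hω1⟩
  · simp [condExp_of_not_le h𝒢le]

/-- The conditional expectation of `1 - V`. -/
lemma aux_condexp_one_sub (μ : Measure Ω) [IsProbabilityMeasure μ]
    {V : Ω → ℝ} (hVi : Integrable V μ)
    (𝒢 : MeasurableSpace Ω) (h𝒢le : 𝒢 ≤ mΩ) :
    μ[(fun ω => 1 - V ω) | 𝒢] =ᵐ[μ] fun ω => 1 - (μ[V | 𝒢]) ω := by
  have h1 : (fun ω : Ω => 1 - V ω) = (fun _ => (1 : ℝ)) - V := by funext ω; simp
  rw [h1]
  refine (condExp_sub (integrable_const 1) hVi _).trans ?_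
  rw [condExp_const h𝒢le (1 : ℝ)]
  filter_upwards with ω
  simp

/-- Pull-out identity for the integral: `∫ (1 - V) g = ∫ (1 - π) g` for
`𝒢`-measurable integrable `g` with a.e. bounded values. -/
lemma aux_pullout (μ : Measure Ω) [IsProbabilityMeasure μ]
    (𝒢 : MeasurableSpace Ω) (h𝒢le : 𝒢 ≤ mΩ)
    {V : Ω → ℝ} (hV : Measurable[mΩ] V) (hVval : ∀ ω, V ω = 0 ∨ V ω = 1)
    {g : Ω → ℝ} (hg : StronglyMeasurable[𝒢] g) (hgi : Integrable g μ)
    (hgbd : ∀ᵐ ω ∂μ, ‖g ω‖ ≤ 1) :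
    ∫ ω, (1 - V ω) * g ω ∂μ = ∫ ω, (1 - (μ[V | 𝒢]) ω) * g ω ∂μ := by
  have hVi : Integrable V μ := aux_int_of_val μ hV hVval
  have h1Vi : Integrable (fun ω => 1 - V ω) μ := (integrable_const 1).sub hVi
  have h1Vbd : ∀ᵐ ω ∂μ, ‖1 - V ω‖ ≤ 1 := by
    refine Filter.Eventually.of_forall fun ω => ?_
    rcases hVval ω with h | h <;> simp [h]
  have hmul : Integrable (g * fun ω => 1 - V ω) μ := by
    refine h1Vi.bdd_mul (hg.mono h𝒢le).aestronglyMeasurable hgbd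
  have h := condExp_mul_of_stronglyMeasurable_left (μ := μ) hg hmul h1Vi
  have hsub := aux_condexp_one_sub μ hVi 𝒢 h𝒢le
  calc ∫ ω, (1 - V ω) * g ω ∂μ
      = ∫ ω, (g * fun ω => 1 - V ω) ω ∂μ := by
        refine integral_congr_ae (Filter.Eventually.of_forall fun ω => ?_)
        simp [mul_comm]
    _ = ∫ ω, (μ[(g * fun ω => 1 - V ω) | 𝒢]) ω ∂μ := (integral_condExp h𝒢le).symm
    _ = ∫ ω, (1 - (μ[V | 𝒢]) ω) * g ω ∂μ := by
        refine integral_congr_ae ?_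
        filter_upwards [h, hsub] with ω hω hω2
        rw [hω]
        simp only [Pi.mul_apply, hω2]
        ring

/-- Integral of a `{0,1}`-valued function is the measure of its level set at 1. -/
lemma aux_integral_eq_measure (μ : Measure Ω) [IsProbabilityMeasure μ] {D : Ω → ℝ}
    (hD : Measurable[mΩ] D) (hDval : ∀ ω, D ω = 0 ∨ D ω = 1) :
    ∫ ω, D ω ∂μ = (μ {ω | D ω = 1}).toReal := by
  have hs : MeasurableSet[mΩ] {ω | D ω = 1} := hD (measurableSet_singleton 1)
  have heq : ∫ ω, D ω ∂μ
      = ∫ ω, Set.indicator {ω | D ω = 1} (fun _ => (1 : ℝ)) ω ∂μ :=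
    integral_congr_ae (Filter.Eventually.of_forall fun ω =>
      congrFun (aux_eq_indicator hDval) ω)
  rw [heq, integral_indicator_const (1 : ℝ) hs]
  simp [measureReal_def]

/-- Key mean-score identity: if the integrals of `V * D` and `π ρ` agree, then
the integral of the mean-score term equals `μ {D = 1}`. -/
lemma aux_mean_score (μ : Measure Ω) [IsProbabilityMeasure μ]
    (𝒢 : MeasurableSpace Ω) (h𝒢le : 𝒢 ≤ mΩ)
    (V D : Ω → ℝ) (hV : Measurable[mΩ] V) (hD : Measurable[mΩ] D)
    (hVval : ∀ ω, V ω = 0 ∨ V ω = 1) (hDval : ∀ ω, D ω = 0 ∨ D ω = 1)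
    (hfac : ∫ ω, V ω * D ω ∂μ = ∫ ω, (μ[V | 𝒢]) ω * (μ[D | 𝒢]) ω ∂μ) :
    ∫ ω, V ω * D ω + (1 - V ω) * (μ[D | 𝒢]) ω ∂μ = (μ {ω | D ω = 1}).toReal := by
  have hDi : Integrable D μ := aux_int_of_val μ hD hDval
  have hρi : Integrable (μ[D | 𝒢]) μ := integrable_condExp
  have hπbd : ∀ᵐ ω ∂μ, ‖(μ[V | 𝒢]) ω‖ ≤ 1 := aux_condexp_bound μ hV hVval 𝒢
  have hρbd : ∀ᵐ ω ∂μ, ‖(μ[D | 𝒢]) ω‖ ≤ 1 := aux_condexp_bound μ hD hDval 𝒢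
  have hVDi : Integrable (fun ω => V ω * D ω) μ := by
    refine aux_int_of_val μ (hV.mul hD) fun ω => ?_
    rcases hVval ω with h | h <;> rcases hDval ω with h' | h' <;> simp [h, h']
  have h1Vρi : Integrable (fun ω => (1 - V ω) * (μ[D | 𝒢]) ω) μ := by
    refine hρi.bdd_mul (c := 1) ((aestronglyMeasurable_const.sub hV.aestronglyMeasurable))
      (Filter.Eventually.of_forall fun ω => ?_)
    rcases hVval ω with h | h <;> simp [h]
  have hπρi : Integrable (fun ω => (μ[V | 𝒢]) ω * (μ[D | 𝒢]) ω) μ :=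
    hρi.bdd_mul (stronglyMeasurable_condExp.mono h𝒢le).aestronglyMeasurable hπbd
  have h1πρi : Integrable (fun ω => (1 - (μ[V | 𝒢]) ω) * (μ[D | 𝒢]) ω) μ := by
    refine hρi.bdd_mul (c := 2)
      ((aestronglyMeasurable_const.sub
        (stronglyMeasurable_condExp.mono h𝒢le).aestronglyMeasurable)) ?_
    filter_upwards [hπbd] with ω hω
    rw [Real.norm_eq_abs] at hω ⊢
    rw [abs_le] at hω ⊢
    constructor <;> [linarith [hω.2]; linarith [hω.1]]
  have hpull : ∫ ω, (1 - V ω) * (μ[D | 𝒢]) ω ∂μ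
      = ∫ ω, (1 - (μ[V | 𝒢]) ω) * (μ[D | 𝒢]) ω ∂μ :=
    aux_pullout μ 𝒢 h𝒢le hV hVval stronglyMeasurable_condExp hρi hρbd
  calc ∫ ω, V ω * D ω + (1 - V ω) * (μ[D | 𝒢]) ω ∂μ
      = (∫ ω, V ω * D ω ∂μ) + ∫ ω, (1 - V ω) * (μ[D | 𝒢]) ω ∂μ :=
        integral_add hVDi h1Vρi
    _ = (∫ ω, (μ[V | 𝒢]) ω * (μ[D | 𝒢]) ω ∂μ)
        + ∫ ω, (1 - (μ[V | 𝒢]) ω) * (μ[D | 𝒢]) ω ∂μ := by rw [hfac, hpull]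
    _ = ∫ ω, (μ[V | 𝒢]) ω * (μ[D | 𝒢]) ω
        + (1 - (μ[V | 𝒢]) ω) * (μ[D | 𝒢]) ω ∂μ := (integral_add hπρi h1πρi).symm
    _ = ∫ ω, (μ[D | 𝒢]) ω ∂μ := by
        refine integral_congr_ae (Filter.Eventually.of_forall fun ω => ?_)
        ring
    _ = ∫ ω, D ω ∂μ := integral_condExp h𝒢le
    _ = (μ {ω | D ω = 1}).toReal := aux_integral_eq_measure μ hD hDval

end Aux

/-- Under MAR (with `V` conditionally independent of the pair
`(D₁, D₂)` given `𝒢`), for mutually exclusive class indicators `D₁, D₂` (`D₁D₂ = 0` a.s.),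
the covariance between the mean-score terms `M₁ = V·D₁ + (1 − V)·ρ₁` and
`M₂ = V·D₂ + (1 − V)·ρ₂` equals `Cov(M₁, M₂) = E[(1 − π) · ρ₁ρ₂] − θ₁θ₂`,
where `θ_k = ℙ(D_k = 1)`. -/
theorem mar_covariance_mean_score_terms
    {Ω : Type*} [mΩ : MeasurableSpace Ω] [StandardBorelSpace Ω] [Nonempty Ω]
    (μ : Measure Ω) [IsProbabilityMeasure μ] {d : ℕ}
    (T : Ω → ℝ) (A : Ω → (Fin d → ℝ)) (D₁ D₂ V : Ω → ℝ)
    (hT : Measurable T) (hA : Measurable A)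
    (hD₁ : Measurable D₁) (hD₂ : Measurable D₂) (hV : Measurable V)
    (hD₁val : ∀ ω, D₁ ω = 0 ∨ D₁ ω = 1) (hD₂val : ∀ ω, D₂ ω = 0 ∨ D₂ ω = 1)
    (hVval : ∀ ω, V ω = 0 ∨ V ω = 1)
    (hexcl : ∀ᵐ ω ∂μ, D₁ ω * D₂ ω = 0)
    (𝒢 : MeasurableSpace Ω)
    (h𝒢 : 𝒢 = MeasurableSpace.comap (fun ω => (T ω, A ω)) inferInstance)
    (h𝒢le : 𝒢 ≤ mΩ)
    (MAR : CondIndepFun (mΩ := mΩ) 𝒢 h𝒢le V (fun ω => (D₁ ω, D₂ ω)) μ) :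
    (∫ ω, (V ω * D₁ ω + (1 - V ω) * (μ[D₁ | 𝒢]) ω)
          * (V ω * D₂ ω + (1 - V ω) * (μ[D₂ | 𝒢]) ω) ∂μ)
      - (∫ ω, V ω * D₁ ω + (1 - V ω) * (μ[D₁ | 𝒢]) ω ∂μ)
        * (∫ ω, V ω * D₂ ω + (1 - V ω) * (μ[D₂ | 𝒢]) ω ∂μ)
      = (∫ ω, (1 - (μ[V | 𝒢]) ω) * ((μ[D₁ | 𝒢]) ω * (μ[D₂ | 𝒢]) ω) ∂μ)
        - (μ {ω | D₁ ω = 1}).toReal * (μ {ω | D₂ ω = 1}).toReal := by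
  -- extract the factorization of conditional expectations from MAR
  have hMAR := (condIndepFun_iff (m' := 𝒢) (hm' := h𝒢le) V (fun ω => (D₁ ω, D₂ ω))
    hV (hD₁.prodMk hD₂) μ).mp MAR
  set s : Set Ω := {ω | V ω = 1} with hs_def
  set t₁ : Set Ω := {ω | D₁ ω = 1} with ht₁_def
  set t₂ : Set Ω := {ω | D₂ ω = 1} with ht₂_def
  have hts1 : MeasurableSet[MeasurableSpace.comap V inferInstance] s :=
    ⟨{1}, measurableSet_singleton 1, rfl⟩
  have hts2₁ : MeasurableSet[MeasurableSpace.comap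
      (fun ω => (D₁ ω, D₂ ω)) inferInstance] t₁ := by
    refine ⟨{1} ×ˢ Set.univ, (measurableSet_singleton 1).prod MeasurableSet.univ, ?_⟩
    ext ω; simp [ht₁_def, eq_comm]
  have hts2₂ : MeasurableSet[MeasurableSpace.comap
      (fun ω => (D₁ ω, D₂ ω)) inferInstance] t₂ := by
    refine ⟨Set.univ ×ˢ {1}, MeasurableSet.univ.prod (measurableSet_singleton 1), ?_⟩
    ext ω; simp [ht₂_def, eq_comm]
  -- conditional expectations of indicators
  have hVind : V = Set.indicator s (fun _ => (1 : ℝ)) := aux_eq_indicator hVval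
  have hD₁ind : D₁ = Set.indicator t₁ (fun _ => (1 : ℝ)) := aux_eq_indicator hD₁val
  have hD₂ind : D₂ = Set.indicator t₂ (fun _ => (1 : ℝ)) := aux_eq_indicator hD₂val
  have hVD₁ind : (fun ω => V ω * D₁ ω) = Set.indicator (s ∩ t₁) (fun _ => (1 : ℝ)) := by
    funext ω
    rcases hVval ω with h | h <;> rcases hD₁val ω with h' | h' <;>
      simp [Set.indicator_apply, Set.mem_inter_iff, hs_def, ht₁_def, h, h']
  have hVD₂ind : (fun ω => V ω * D₂ ω) = Set.indicator (s ∩ t₂) (fun _ => (1 : ℝ)) := by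
    funext ω
    rcases hVval ω with h | h <;> rcases hD₂val ω with h' | h' <;>
      simp [Set.indicator_apply, Set.mem_inter_iff, hs_def, ht₂_def, h, h']
  -- factorization of the integrals ∫ V Dₖ = ∫ π ρₖ
  have hfac : ∀ (D : Ω → ℝ) (t : Set Ω), (fun ω => V ω * D ω)
        = Set.indicator (s ∩ t) (fun _ => (1 : ℝ))
      → D = Set.indicator t (fun _ => (1 : ℝ))
      → (μ⟦s ∩ t | 𝒢⟧) =ᵐ[μ] (μ⟦s | 𝒢⟧) * (μ⟦t | 𝒢⟧)
      → ∫ ω, V ω * D ω ∂μ = ∫ ω, (μ[V | 𝒢]) ω * (μ[D | 𝒢]) ω ∂μ := by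
    intro D t hVDind hDind hcond
    calc ∫ ω, V ω * D ω ∂μ
        = ∫ ω, (μ⟦s ∩ t | 𝒢⟧) ω ∂μ := by
          rw [show (∫ ω, V ω * D ω ∂μ)
              = ∫ ω, Set.indicator (s ∩ t) (fun _ => (1 : ℝ)) ω ∂μ by
            exact integral_congr_ae (Filter.Eventually.of_forall fun ω =>
              congrFun hVDind ω)]
          exact (integral_condExp h𝒢le).symm
      _ = ∫ ω, (μ[V | 𝒢]) ω * (μ[D | 𝒢]) ω ∂μ := by
          refine integral_congr_ae ?_
          filter_upwards [hcond] with ω hω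
          rw [hω, Pi.mul_apply, hVind, hDind]
  have hfac₁ : ∫ ω, V ω * D₁ ω ∂μ = ∫ ω, (μ[V | 𝒢]) ω * (μ[D₁ | 𝒢]) ω ∂μ :=
    hfac D₁ t₁ hVD₁ind hD₁ind (hMAR s t₁ hts1 hts2₁)
  have hfac₂ : ∫ ω, V ω * D₂ ω ∂μ = ∫ ω, (μ[V | 𝒢]) ω * (μ[D₂ | 𝒢]) ω ∂μ :=
    hfac D₂ t₂ hVD₂ind hD₂ind (hMAR s t₂ hts1 hts2₂)
  -- means of the mean-score terms
  have hmean₁ : ∫ ω, V ω * D₁ ω + (1 - V ω) * (μ[D₁ | 𝒢]) ω ∂μ = (μ t₁).toReal :=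
    aux_mean_score μ 𝒢 h𝒢le V D₁ hV hD₁ hVval hD₁val hfac₁
  have hmean₂ : ∫ ω, V ω * D₂ ω + (1 - V ω) * (μ[D₂ | 𝒢]) ω ∂μ = (μ t₂).toReal :=
    aux_mean_score μ 𝒢 h𝒢le V D₂ hV hD₂ hVval hD₂val hfac₂
  -- the second moment term
  have hρ₁bd : ∀ᵐ ω ∂μ, ‖(μ[D₁ | 𝒢]) ω‖ ≤ 1 := aux_condexp_bound μ hD₁ hD₁val 𝒢
  have hρ₂bd : ∀ᵐ ω ∂μ, ‖(μ[D₂ | 𝒢]) ω‖ ≤ 1 := aux_condexp_bound μ hD₂ hD₂val 𝒢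
  have hρρi : Integrable (fun ω => (μ[D₁ | 𝒢]) ω * (μ[D₂ | 𝒢]) ω) μ :=
    integrable_condExp.bdd_mul
      (stronglyMeasurable_condExp.mono h𝒢le).aestronglyMeasurable hρ₁bd
  have hρρbd : ∀ᵐ ω ∂μ, ‖(μ[D₁ | 𝒢]) ω * (μ[D₂ | 𝒢]) ω‖ ≤ 1 := by
    filter_upwards [hρ₁bd, hρ₂bd] with ω h1 h2
    rw [norm_mul]
    calc ‖(μ[D₁ | 𝒢]) ω‖ * ‖(μ[D₂ | 𝒢]) ω‖ ≤ 1 * 1 :=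
      mul_le_mul h1 h2 (norm_nonneg _) zero_le_one
    _ = 1 := one_mul 1
  have hsecond : ∫ ω, (V ω * D₁ ω + (1 - V ω) * (μ[D₁ | 𝒢]) ω)
        * (V ω * D₂ ω + (1 - V ω) * (μ[D₂ | 𝒢]) ω) ∂μ
      = ∫ ω, (1 - (μ[V | 𝒢]) ω) * ((μ[D₁ | 𝒢]) ω * (μ[D₂ | 𝒢]) ω) ∂μ := by
    have hstep : ∫ ω, (V ω * D₁ ω + (1 - V ω) * (μ[D₁ | 𝒢]) ω)
          * (V ω * D₂ ω + (1 - V ω) * (μ[D₂ | 𝒢]) ω) ∂μ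
        = ∫ ω, (1 - V ω) * ((μ[D₁ | 𝒢]) ω * (μ[D₂ | 𝒢]) ω) ∂μ := by
      refine integral_congr_ae ?_
      filter_upwards [hexcl] with ω h0
      rcases hVval ω with h | h
      · rw [h]; ring
      · rw [h]; simp [h0]
    rw [hstep]
    exact aux_pullout μ 𝒢 h𝒢le hV hVval
      (stronglyMeasurable_condExp.mul stronglyMeasurable_condExp) hρρi hρρbd
  rw [hsecond, hmean₁, hmean₂]
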